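/- Let X be a compact subset of ℂⁿ, X₀ a closed subset of X, and f ∈ C(X) with X₀ = f⁻¹(0). Suppose P(f(X)) = C(f(X)) and P(f⁻¹(t)) = C(f⁻¹(t)) for all t ∈ ℂ \ {0}. Then P(Γ_f) = {g ∈ C(Γ_f) : g restricted to X₀ × {0} belongs to P(X₀ × {0})}, where Γ_f is the graph of f. -/

import Mathlib

open MvPolynomial

/-- The polynomially convex hull of a set `X ⊆ ℂⁿ`. -/
noncomputable def polyHull (n : ℕ) (X : Set (Fin n → ℂ)) : Set (Fin n → ℂ) :=
  {z | ∀ p : MvPolynomial (Fin n) ℂ, ‖eval z p‖ ≤ sSup ((fun x => ‖eval x p‖) '' X)}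

/-- `X` is polynomially convex when it equals its polynomially convex hull. -/
def IsPolyConvex (n : ℕ) (X : Set (Fin n → ℂ)) : Prop := polyHull n X = X

/-- `P(X)`: the uniform closure in `C(X)` of the holomorphic polynomials restricted to `X`. -/
noncomputable def polyAlg (n : ℕ) (X : Set (Fin n → ℂ)) : Set C(X, ℂ) :=
  closure {f : C(X, ℂ) | ∃ p : MvPolynomial (Fin n) ℂ, ∀ x : X, f x = eval (x : Fin n → ℂ) p}

/-- `P(Y)` for a compact subset `Y ⊆ ℂ`. -/
noncomputable def polyAlg1 (Y : Set ℂ) : Set C(Y, ℂ) :=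
  closure {f : C(Y, ℂ) | ∃ p : Polynomial ℂ, ∀ y : Y, f y = p.eval (y : ℂ)}

lemma continuous_snoc_aux {α : Type*} [TopologicalSpace α] (n : ℕ)
    (g : α → Fin n → ℂ) (h : α → ℂ) (hg : Continuous g) (hh : Continuous h) :
    Continuous fun a => (Fin.snoc (g a) (h a) : Fin (n + 1) → ℂ) := by
  apply continuous_pi; intro i
  refine Fin.lastCases ?_ ?_ i
  · simpa only [Fin.snoc_last] using hh
  · intro j; simpa only [Fin.snoc_castSucc, Function.comp_def] using (continuous_apply j).comp hg

lemma eval_onevar (n : ℕ) (z : Fin (n+1) → ℂ) (Q : Polynomial ℂ) :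
    eval z (Polynomial.eval₂ MvPolynomial.C (X (Fin.last n)) Q) = Q.eval (z (Fin.last n)) := by
  rw [Polynomial.hom_eval₂]
  simp only [Polynomial.eval, eval_X]
  congr 1
  ext a
  simp

set_option maxHeartbeats 400000 in
theorem stmt3 (n : ℕ) (X : Set (Fin n → ℂ)) (hX : IsCompact X)
    (X₀ : Set (Fin n → ℂ)) (hX₀closed : IsClosed X₀) (hX₀sub : X₀ ⊆ X)
    (f : C(X, ℂ))
    (hfib0 : X₀ = Subtype.val '' (f ⁻¹' {0}))
    (hfX : polyAlg1 (Set.range f) = Set.univ)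
    (hfibers : ∀ t : ℂ, t ≠ 0 →
      polyAlg n (Subtype.val '' (f ⁻¹' {t})) = Set.univ)
    -- the graph of `f` and the set `X₀ × {0}` inside it
    (Γ E₀ : Set (Fin (n + 1) → ℂ))
    (hΓ : Γ = {z : Fin (n + 1) → ℂ | ∃ x : X, z = Fin.snoc (x : Fin n → ℂ) (f x)})
    (hE₀ : E₀ = {z : Fin (n + 1) → ℂ | ∃ w ∈ X₀, z = Fin.snoc w 0})
    (hsub : E₀ ⊆ Γ) :
    polyAlg (n + 1) Γ =
      {g : C(Γ, ℂ) |
        g.comp ⟨Set.inclusion hsub, continuous_inclusion hsub⟩ ∈ polyAlg (n + 1) E₀} := by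
  haveI : CompactSpace ↥X := isCompact_iff_compactSpace.mp hX
  -- Γ is compact
  have hΓeq : Γ = Set.range fun x : ↥X => (Fin.snoc (x : Fin n → ℂ) (f x) : Fin (n+1) → ℂ) := by
    rw [hΓ]; ext z; simp [Set.range, eq_comm]
  have hsnocX : Continuous fun x : ↥X => (Fin.snoc (x : Fin n → ℂ) (f x) : Fin (n+1) → ℂ) :=
    continuous_snoc_aux n _ _ continuous_subtype_val f.continuous
  have hΓcomp : IsCompact Γ := hΓeq ▸ isCompact_range hsnocX
  haveI : CompactSpace ↥Γ := isCompact_iff_compactSpace.mp hΓcomp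
  -- E₀ is compact
  have hX₀comp : IsCompact X₀ := hX.of_isClosed_subset hX₀closed hX₀sub
  have hE₀eq : E₀ = (fun w : Fin n → ℂ => (Fin.snoc w (0:ℂ) : Fin (n+1) → ℂ)) '' X₀ := by
    rw [hE₀]; ext z; simp [eq_comm]
  have hE₀comp : IsCompact E₀ :=
    hE₀eq ▸ hX₀comp.image (continuous_snoc_aux n id (fun _ => 0) continuous_id continuous_const)
  haveI : CompactSpace ↥E₀ := isCompact_iff_compactSpace.mp hE₀comp
  -- the range of f is compact
  have hYcomp : IsCompact (Set.range ⇑f) := isCompact_range f.continuous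
  haveI : CompactSpace ↥(Set.range ⇑f) := isCompact_iff_compactSpace.mp hYcomp
  -- membership facts for elements of Γ
  have hΓmem : ∀ z : ↥Γ, ∃ x : ↥X, (z : Fin (n+1) → ℂ) = Fin.snoc (x : Fin n → ℂ) (f x) := by
    intro z
    have hz : (z : Fin (n+1) → ℂ) ∈ {z : Fin (n + 1) → ℂ | ∃ x : X,
        z = Fin.snoc (x : Fin n → ℂ) (f x)} := by rw [← hΓ]; exact z.2
    exact hz
  have hlast : ∀ z : ↥Γ, (z : Fin (n+1) → ℂ) (Fin.last n) ∈ Set.range ⇑f := by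
    intro z
    obtain ⟨x, hx⟩ := hΓmem z
    exact ⟨x, by rw [hx, Fin.snoc_last]⟩
  ext g
  simp only [Set.mem_setOf_eq]
  constructor
  · -- easy direction: restriction of polynomials are polynomials
    intro hg
    rw [polyAlg] at hg
    rw [polyAlg]
    refine map_mem_closure
      (f := fun u : C(↥Γ, ℂ) => u.comp ⟨Set.inclusion hsub, continuous_inclusion hsub⟩)
      (ContinuousMap.continuous_precomp _) hg ?_
    rintro u ⟨p, hp⟩
    exact ⟨p, fun w => hp ⟨(w : Fin (n+1) → ℂ), hsub w.2⟩⟩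
  · -- hard direction
    intro hg
    rw [polyAlg, Metric.mem_closure_iff]
    intro ε hε
    set ε4 := ε / 4 with hε4def
    have hε4 : 0 < ε4 := by positivity
    -- Step 1: fiberwise approximation
    have key : ∀ t : ↥(Set.range ⇑f), ∃ p : MvPolynomial (Fin (n+1)) ℂ,
        ∀ z : ↥Γ, (z : Fin (n+1) → ℂ) (Fin.last n) = (t : ℂ) →
          ‖g z - eval (z : Fin (n+1) → ℂ) p‖ < ε4 := by
      rintro ⟨t, ht⟩
      by_cases h0 : t = 0
      · -- the fiber over 0 is E₀
        subst h0
        obtain ⟨u, ⟨p, hp⟩, hd⟩ := Metric.mem_closure_iff.mp hg ε4 hε4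
        refine ⟨p, fun z hz => ?_⟩
        obtain ⟨x, hx⟩ := hΓmem z
        have hfx : f x = 0 := by
          have := hz; rw [hx, Fin.snoc_last] at this; exact this
        have hzE : (z : Fin (n+1) → ℂ) ∈ E₀ := by
          rw [hE₀]
          exact ⟨(x : Fin n → ℂ), hfib0 ▸ ⟨x, hfx, rfl⟩, by rw [hx, hfx]⟩
        have h1 : (g.comp ⟨Set.inclusion hsub, continuous_inclusion hsub⟩) ⟨_, hzE⟩ = g z := by
          simp only [ContinuousMap.comp_apply, ContinuousMap.coe_mk]
        have h2 : u ⟨_, hzE⟩ = eval (z : Fin (n+1) → ℂ) p := hp ⟨_, hzE⟩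
        calc ‖g z - eval (z : Fin (n+1) → ℂ) p‖
            = dist ((g.comp ⟨Set.inclusion hsub, continuous_inclusion hsub⟩) ⟨_, hzE⟩)
              (u ⟨_, hzE⟩) := by rw [h1, h2, dist_eq_norm]
          _ ≤ dist (g.comp ⟨Set.inclusion hsub, continuous_inclusion hsub⟩) u :=
              ContinuousMap.dist_apply_le_dist _
          _ < ε4 := hd
      · -- the fiber over t ≠ 0
        set F := Subtype.val '' (f ⁻¹' {t}) with hF
        have hFcomp : IsCompact F :=
          ((isClosed_singleton.preimage f.continuous).isCompact).image continuous_subtype_val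
        haveI : CompactSpace ↥F := isCompact_iff_compactSpace.mp hFcomp
        have hmem : ∀ x : ↥F, (Fin.snoc (x : Fin n → ℂ) t : Fin (n+1) → ℂ) ∈ Γ := by
          rintro ⟨x, x₀, hx₀, rfl⟩
          rw [hΓ]
          exact ⟨x₀, by rw [show f x₀ = t from hx₀]⟩
        set u : C(↥F, ℂ) :=
          ⟨fun x => g ⟨_, hmem x⟩, g.continuous.comp (Continuous.subtype_mk
            (continuous_snoc_aux n _ _ continuous_subtype_val continuous_const) _)⟩ with hu
        have humem : u ∈ polyAlg n F := by rw [hfibers t h0]; trivial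
        obtain ⟨v, ⟨q, hq⟩, hd⟩ := Metric.mem_closure_iff.mp humem ε4 hε4
        refine ⟨rename Fin.castSucc q, fun z hz => ?_⟩
        obtain ⟨x, hx⟩ := hΓmem z
        have hfx : f x = t := by
          have := hz; rw [hx, Fin.snoc_last] at this; exact this
        have hxF : (x : Fin n → ℂ) ∈ F := ⟨x, hfx, rfl⟩
        have hgz : g z = u ⟨_, hxF⟩ := by
          rw [hu]
          simp only [ContinuousMap.coe_mk]
          congr 1
          exact Subtype.ext (by rw [hx, hfx])
        have heval : eval (z : Fin (n+1) → ℂ) (rename Fin.castSucc q)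
            = eval (x : Fin n → ℂ) q := by
          have hc : (z : Fin (n+1) → ℂ) ∘ Fin.castSucc = (x : Fin n → ℂ) := by
            funext j; simp [hx, Fin.snoc_castSucc]
          rw [eval_rename, hc]
        calc ‖g z - eval (z : Fin (n+1) → ℂ) (rename Fin.castSucc q)‖
            = dist (u ⟨_, hxF⟩) (v ⟨_, hxF⟩) := by
              rw [hgz, heval, hq ⟨_, hxF⟩, dist_eq_norm]
          _ ≤ dist u v := ContinuousMap.dist_apply_le_dist _
          _ < ε4 := hd
    -- Step 2: neighborhoods on which the approximation persists
    have cover : ∀ t : ↥(Set.range ⇑f), ∃ (p : MvPolynomial (Fin (n+1)) ℂ) (U : Set ℂ),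
        IsOpen U ∧ (t : ℂ) ∈ U ∧ ∀ z : ↥Γ, (z : Fin (n+1) → ℂ) (Fin.last n) ∈ U →
          ‖g z - eval (z : Fin (n+1) → ℂ) p‖ < ε4 := by
      intro t
      obtain ⟨p, hp⟩ := key t
      set B := (fun z : ↥Γ => (z : Fin (n+1) → ℂ) (Fin.last n)) ''
        {z : ↥Γ | ε4 ≤ ‖g z - eval (z : Fin (n+1) → ℂ) p‖} with hB
      have hcont : Continuous fun z : ↥Γ => ‖g z - eval (z : Fin (n+1) → ℂ) p‖ :=
        (g.continuous.sub ((MvPolynomial.continuous_eval p).comp continuous_subtype_val)).norm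
      have hBcomp : IsCompact B :=
        ((isClosed_le continuous_const hcont).isCompact).image
          ((continuous_apply (Fin.last n)).comp continuous_subtype_val)
      refine ⟨p, Bᶜ, hBcomp.isClosed.isOpen_compl, ?_, ?_⟩
      · rintro ⟨z, hz, hzt⟩
        exact absurd (hp z hzt) (not_lt.mpr hz)
      · intro z hz
        by_contra hcon
        exact hz ⟨z, not_lt.mp hcon, rfl⟩
    choose p U hUo hUt hU using cover
    -- Step 3: finite subcover
    have hYcov : Set.range ⇑f ⊆ ⋃ t : ↥(Set.range ⇑f), U t := by
      intro y hy
      exact Set.mem_iUnion.mpr ⟨⟨y, hy⟩, hUt ⟨y, hy⟩⟩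
    obtain ⟨T, hT⟩ := hYcomp.elim_finite_subcover U hUo hYcov
    -- Step 4: partition of unity
    set ι := {t : ↥(Set.range ⇑f) // t ∈ T} with hι
    have hcov' : Set.range ⇑f ⊆ ⋃ i : ι, U i.1 := by
      intro y hy
      obtain ⟨t, ht, hyt⟩ := Set.mem_iUnion₂.mp (hT hy)
      exact Set.mem_iUnion.mpr ⟨⟨t, ht⟩, hyt⟩
    obtain ⟨ρ, hρ⟩ := PartitionOfUnity.exists_isSubordinate (ι := ι)
      hYcomp.isClosed (fun i => U i.1) (fun i => hUo i.1) hcov'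
    -- Step 5: norms and polynomial approximations of the partition functions
    set P : ι → C(↥Γ, ℂ) := fun i =>
      ⟨fun z => eval (z : Fin (n+1) → ℂ) (p i.1),
        (MvPolynomial.continuous_eval _).comp continuous_subtype_val⟩ with hP
    set D : ℝ := ∑ i : ι, (‖P i‖ + 1) with hD
    have hDnn : 0 ≤ D := Finset.sum_nonneg fun i _ => by positivity
    set δ : ℝ := ε4 / (D + 1) with hδ
    have hδpos : 0 < δ := div_pos hε4 (by linarith)
    have happrox : ∀ i : ι, ∃ q : Polynomial ℂ,
        ∀ y : ↥(Set.range ⇑f), ‖((ρ i (y : ℂ) : ℝ) : ℂ) - q.eval (y : ℂ)‖ < δ := by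
      intro i
      set ψ : C(↥(Set.range ⇑f), ℂ) :=
        ⟨fun y => ((ρ i (y : ℂ) : ℝ) : ℂ),
          Complex.continuous_ofReal.comp ((ρ i).continuous.comp continuous_subtype_val)⟩ with hψ
      have hψmem : ψ ∈ polyAlg1 (Set.range ⇑f) := by rw [hfX]; trivial
      obtain ⟨v, ⟨q, hq⟩, hd⟩ := Metric.mem_closure_iff.mp hψmem δ hδpos
      refine ⟨q, fun y => ?_⟩
      calc ‖((ρ i (y : ℂ) : ℝ) : ℂ) - q.eval (y : ℂ)‖
          = dist (ψ y) (v y) := by rw [hq y, dist_eq_norm]; rfl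
        _ ≤ dist ψ v := ContinuousMap.dist_apply_le_dist _
        _ < δ := hd
    choose q hq using happrox
    -- Step 6: the final polynomial
    set Ptot : MvPolynomial (Fin (n+1)) ℂ :=
      ∑ i : ι, Polynomial.eval₂ MvPolynomial.C (MvPolynomial.X (Fin.last n)) (q i) * p i.1
      with hPtot
    have hPtoteval : ∀ z : ↥Γ, eval (z : Fin (n+1) → ℂ) Ptot =
        ∑ i : ι, (q i).eval ((z : Fin (n+1) → ℂ) (Fin.last n)) *
          eval (z : Fin (n+1) → ℂ) (p i.1) := by
      intro z
      rw [hPtot, map_sum]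
      congr 1
      funext i
      rw [map_mul, eval_onevar]
    -- Step 7: the estimate
    have hest : ∀ z : ↥Γ, ‖g z - eval (z : Fin (n+1) → ℂ) Ptot‖ ≤ ε / 2 := by
      intro z
      set t0 := (z : Fin (n+1) → ℂ) (Fin.last n) with ht0
      have ht0Y : t0 ∈ Set.range ⇑f := hlast z
      have hsum1 : ∑ i : ι, ρ i t0 = 1 := by
        have := ρ.sum_eq_one ht0Y
        rwa [finsum_eq_sum_of_fintype] at this
      have hsum1' : ∑ i : ι, ((ρ i t0 : ℝ) : ℂ) = 1 := by
        rw [← Complex.ofReal_sum, hsum1, Complex.ofReal_one]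
      have expand : g z - eval (z : Fin (n+1) → ℂ) Ptot =
          (∑ i : ι, ((ρ i t0 : ℝ) : ℂ) * (g z - eval (z : Fin (n+1) → ℂ) (p i.1))) +
          ∑ i : ι, (((ρ i t0 : ℝ) : ℂ) - (q i).eval t0) *
            eval (z : Fin (n+1) → ℂ) (p i.1) := by
        rw [hPtoteval z, ← Finset.sum_add_distrib]
        have : ∀ i : ι, ((ρ i t0 : ℝ) : ℂ) * (g z - eval (z : Fin (n+1) → ℂ) (p i.1)) +
            (((ρ i t0 : ℝ) : ℂ) - (q i).eval t0) * eval (z : Fin (n+1) → ℂ) (p i.1) =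
            ((ρ i t0 : ℝ) : ℂ) * g z - (q i).eval t0 * eval (z : Fin (n+1) → ℂ) (p i.1) := by
          intro i; ring
        rw [Finset.sum_congr rfl fun i _ => this i, Finset.sum_sub_distrib,
          ← Finset.sum_mul, hsum1', one_mul]
      rw [expand]
      have hb1 : ‖∑ i : ι, ((ρ i t0 : ℝ) : ℂ) * (g z - eval (z : Fin (n+1) → ℂ) (p i.1))‖
          ≤ ε4 := by
        calc ‖∑ i : ι, ((ρ i t0 : ℝ) : ℂ) * (g z - eval (z : Fin (n+1) → ℂ) (p i.1))‖
            ≤ ∑ i : ι, ‖((ρ i t0 : ℝ) : ℂ) * (g z - eval (z : Fin (n+1) → ℂ) (p i.1))‖ :=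
              norm_sum_le _ _
          _ ≤ ∑ i : ι, ρ i t0 * ε4 := by
              apply Finset.sum_le_sum
              intro i _
              rw [norm_mul, Complex.norm_real, Real.norm_of_nonneg (ρ.nonneg i t0)]
              by_cases hzero : ρ i t0 = 0
              · rw [hzero, zero_mul, zero_mul]
              · have htU : t0 ∈ U i.1 := hρ i (subset_tsupport _ hzero)
                exact mul_le_mul_of_nonneg_left (le_of_lt (hU i.1 z htU)) (ρ.nonneg i t0)
          _ = ε4 := by rw [← Finset.sum_mul, hsum1, one_mul]
      have hb2 : ‖∑ i : ι, (((ρ i t0 : ℝ) : ℂ) - (q i).eval t0) *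
          eval (z : Fin (n+1) → ℂ) (p i.1)‖ ≤ ε4 := by
        calc ‖∑ i : ι, (((ρ i t0 : ℝ) : ℂ) - (q i).eval t0) *
            eval (z : Fin (n+1) → ℂ) (p i.1)‖
            ≤ ∑ i : ι, ‖(((ρ i t0 : ℝ) : ℂ) - (q i).eval t0) *
              eval (z : Fin (n+1) → ℂ) (p i.1)‖ := norm_sum_le _ _
          _ ≤ ∑ i : ι, δ * (‖P i‖ + 1) := by
              apply Finset.sum_le_sum
              intro i _
              rw [norm_mul]
              have h1 : ‖((ρ i t0 : ℝ) : ℂ) - (q i).eval t0‖ ≤ δ :=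
                le_of_lt (hq i ⟨t0, ht0Y⟩)
              have h2 : ‖eval (z : Fin (n+1) → ℂ) (p i.1)‖ ≤ ‖P i‖ + 1 := by
                have h3 : P i z = eval (z : Fin (n+1) → ℂ) (p i.1) := rfl
                have h4 := (P i).norm_coe_le_norm z
                rw [h3] at h4
                linarith
              exact mul_le_mul h1 h2 (norm_nonneg _) (le_of_lt hδpos)
          _ = δ * D := by rw [← Finset.mul_sum]
          _ ≤ ε4 := by
              rw [hδ, div_mul_eq_mul_div, div_le_iff₀ (by linarith : (0:ℝ) < D + 1)]
              have h5 : ε4 * D ≤ ε4 * (D + 1) :=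
                mul_le_mul_of_nonneg_left (by linarith) hε4.le
              linarith
      calc ‖(∑ i : ι, ((ρ i t0 : ℝ) : ℂ) * (g z - eval (z : Fin (n+1) → ℂ) (p i.1))) +
            ∑ i : ι, (((ρ i t0 : ℝ) : ℂ) - (q i).eval t0) *
              eval (z : Fin (n+1) → ℂ) (p i.1)‖
          ≤ ε4 + ε4 := le_trans (norm_add_le _ _) (add_le_add hb1 hb2)
        _ = ε / 2 := by rw [hε4def]; ring
    -- conclude
    refine ⟨⟨fun z => eval (z : Fin (n+1) → ℂ) Ptot,
      (MvPolynomial.continuous_eval _).comp continuous_subtype_val⟩, ⟨Ptot, fun z => rfl⟩, ?_⟩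
    have : dist g ⟨fun z => eval (z : Fin (n+1) → ℂ) Ptot,
        (MvPolynomial.continuous_eval _).comp continuous_subtype_val⟩ ≤ ε / 2 := by
      rw [ContinuousMap.dist_le (by linarith)]
      intro z
      rw [dist_eq_norm]
      exact hest z
    linarith
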